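/- Let 0 < δ < 1, θ > 0, c > 0, d ≥ 1, and define, using H(z) := (1-δ)∫₀¹ t^{-δ}/(1+zt) dt: A₁(p) := 1 - (pθδ/(1-δ))H(θ(1-p)), A₂(p) := 1 - (pθδ/(1-δ))H(θd(1-p)), G₁(p) := 1 - (pθδ/(1-δ))H(θ(1-p)), G₂(p) := 1 - (pθδ/(1-δ))H(θ(1-p)/d). Set D₁(p₁,p₂) := A₁(p₁) + c·d^δ·G₂(p₂) and D₂(p₁,p₂) := (A₂(p₁) + c·d^δ·G₁(p₂))/(c·d^δ). Then for all p₁, p₂ ∈ [0,1], D₁(p₁,p₂) > 0 implies D₂(p₁,p₂) > 0. -/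
import Mathlib


open MeasureTheory Set

/-- H(z) = ₂F₁(1, 1-δ; 2-δ; -z) via its Euler integral representation. -/
noncomputable def Hfun (δ z : ℝ) : ℝ :=
  (1 - δ) * ∫ t in Ioo (0 : ℝ) 1, t ^ (-δ) / (1 + z * t)

lemma Hfun_integrable (δ z : ℝ) (hδ : 0 < δ) (hδ1 : δ < 1) (hz : 0 ≤ z) :
    IntegrableOn (fun t : ℝ => t ^ (-δ) / (1 + z * t)) (Ioo 0 1) := by
  have hint : IntegrableOn (fun t : ℝ => t ^ (-δ)) (Ioo 0 1) := by
    rw [intervalIntegral.integrableOn_Ioo_rpow_iff one_pos]; linarith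
  apply hint.integrable.mono'
  · exact (Measurable.div (measurable_id.pow_const _)
      (measurable_const.add (measurable_const.mul measurable_id))).aestronglyMeasurable
  · filter_upwards [ae_restrict_mem measurableSet_Ioo] with t ht
    have h1 : (1:ℝ) ≤ 1 + z * t := by nlinarith [ht.1, ht.2]
    have h0 : (0:ℝ) ≤ t ^ (-δ) := Real.rpow_nonneg ht.1.le _
    rw [Real.norm_eq_abs, abs_div, abs_of_nonneg h0, abs_of_pos (by linarith : (0:ℝ) < 1 + z * t)]
    calc t ^ (-δ) / (1 + z * t) ≤ t ^ (-δ) / 1 := by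
          apply div_le_div_of_nonneg_left h0 one_pos h1
      _ = t ^ (-δ) := div_one _

lemma Hfun_anti (δ z₁ z₂ : ℝ) (hδ : 0 < δ) (hδ1 : δ < 1) (hz₁ : 0 ≤ z₁)
    (hz : z₁ ≤ z₂) : Hfun δ z₂ ≤ Hfun δ z₁ := by
  unfold Hfun
  apply mul_le_mul_of_nonneg_left _ (by linarith)
  apply setIntegral_mono_on (Hfun_integrable δ z₂ hδ hδ1 (hz₁.trans hz))
    (Hfun_integrable δ z₁ hδ hδ1 hz₁) measurableSet_Ioo
  intro t ht
  have h0 : (0:ℝ) ≤ t ^ (-δ) := Real.rpow_nonneg ht.1.le _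
  apply div_le_div_of_nonneg_left h0 (by nlinarith [ht.1, ht.2]) (by nlinarith [ht.1])

theorem stmt17 (δ θ c d : ℝ) (hδ : 0 < δ) (hδ1 : δ < 1) (hθ : 0 < θ)
    (hc : 0 < c) (hd : 1 ≤ d) (p₁ p₂ : ℝ)
    (hp₁ : p₁ ∈ Icc (0 : ℝ) 1) (hp₂ : p₂ ∈ Icc (0 : ℝ) 1)
    (hD₁ : 0 < (1 - p₁ * θ * δ / (1 - δ) * Hfun δ (θ * (1 - p₁))) +
        c * d ^ δ * (1 - p₂ * θ * δ / (1 - δ) * Hfun δ (θ * (1 - p₂) / d))) :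
    0 < ((1 - p₁ * θ * δ / (1 - δ) * Hfun δ (θ * d * (1 - p₁))) +
        c * d ^ δ * (1 - p₂ * θ * δ / (1 - δ) * Hfun δ (θ * (1 - p₂)))) /
      (c * d ^ δ) := by
  have hdpos : (0:ℝ) < d := lt_of_lt_of_le one_pos hd
  have hden : 0 < c * d ^ δ := mul_pos hc (Real.rpow_pos_of_pos hdpos _)
  apply div_pos _ hden
  have h1p₁ : 0 ≤ 1 - p₁ := by linarith [hp₁.2]
  have h1p₂ : 0 ≤ 1 - p₂ := by linarith [hp₂.2]
  have hz₁ : 0 ≤ θ * (1 - p₁) := mul_nonneg hθ.le h1p₁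
  have hH₁ : Hfun δ (θ * d * (1 - p₁)) ≤ Hfun δ (θ * (1 - p₁)) := by
    apply Hfun_anti δ _ _ hδ hδ1 hz₁
    nlinarith
  have hz₂ : 0 ≤ θ * (1 - p₂) / d := div_nonneg (mul_nonneg hθ.le h1p₂) hdpos.le
  have hH₂ : Hfun δ (θ * (1 - p₂)) ≤ Hfun δ (θ * (1 - p₂) / d) := by
    apply Hfun_anti δ _ _ hδ hδ1 hz₂
    rw [div_le_iff₀ hdpos]
    nlinarith [mul_nonneg hθ.le h1p₂]
  have hc₁ : 0 ≤ p₁ * θ * δ / (1 - δ) :=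
    div_nonneg (mul_nonneg (mul_nonneg hp₁.1 hθ.le) hδ.le) (by linarith)
  have hc₂ : 0 ≤ p₂ * θ * δ / (1 - δ) :=
    div_nonneg (mul_nonneg (mul_nonneg hp₂.1 hθ.le) hδ.le) (by linarith)
  have e₁ := mul_le_mul_of_nonneg_left hH₁ hc₁
  have e₂ := mul_le_mul_of_nonneg_left hH₂ hc₂
  nlinarith [mul_le_mul_of_nonneg_left e₂ hden.le]
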